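/- For every (n+1)×(n+1) matrix M over F_q and every field automorphism σ of F_q, the number of pairs of projective points ([x],[ξ]) with ξ·x = 0 and ξ·M·x^σ = 0 equals (q^{n+1}−1)(q^{n−1}−1)/(q−1)² + θ_M·q^{n−1}. -/

import Mathlib

open Matrix Projectivization Module

section counting

/-- If every fiber of `f` has `Nat.card` equal to `k`, then `Nat.card α = Nat.card β * k`. -/
lemma card_of_fibers {α β : Type*} [Finite α] [Finite β] (f : α → β) (k : ℕ)
    (h : ∀ b : β, Nat.card {a // f a = b} = k) : Nat.card α = Nat.card β * k := by
  classical
  haveI := Fintype.ofFinite α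
  haveI := Fintype.ofFinite β
  rw [Nat.card_congr (Equiv.sigmaFiberEquiv f).symm]
  rw [Nat.card_eq_fintype_card, Fintype.card_sigma, Nat.card_eq_fintype_card]
  have : ∀ b : β, Fintype.card {a // f a = b} = k := by
    intro b; rw [← h b, Nat.card_eq_fintype_card]
  simp [this, Finset.sum_const, mul_comm]

variable {F : Type} [Field F] [Fintype F] {V : Type*} [AddCommGroup V] [Module F V]

lemma card_fiber_mk' (p : Projectivization F V) :
    Nat.card {v : {u : V // u ≠ 0} // Projectivization.mk' F v = p} = Fintype.card F - 1 := by
  have hrep := p.rep_nonzero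
  have : Fˣ ≃ {v : {u : V // u ≠ 0} // Projectivization.mk' F v = p} := by
    refine Equiv.ofBijective (fun c => ⟨⟨c • p.rep, by
        rw [Units.smul_def]; exact smul_ne_zero c.ne_zero hrep⟩, ?_⟩) ⟨?_, ?_⟩
    · rw [mk'_eq_mk]
      exact ((mk_eq_mk_iff F _ _ _ hrep).2 ⟨c, rfl⟩).trans (mk_rep p)
    · intro c c' hcc
      have h1 : c • p.rep = c' • p.rep := congrArg (fun x => x.1.1) hcc
      rw [Units.smul_def, Units.smul_def] at h1
      exact Units.ext (smul_left_injective F hrep h1)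
    · rintro ⟨⟨v, hv⟩, hm⟩
      rw [mk'_eq_mk] at hm
      obtain ⟨a, ha⟩ := (mk_eq_mk_iff F v p.rep hv hrep).1 (hm.trans (mk_rep p).symm)
      exact ⟨a, Subtype.ext (Subtype.ext ha)⟩
  rw [Nat.card_congr this.symm, Nat.card_units, Nat.card_eq_fintype_card]

lemma proj_count [Finite V] (P : V → Prop)
    (hP : ∀ (c : F), c ≠ 0 → ∀ v, P v → P (c • v)) :
    Nat.card {v : V // v ≠ 0 ∧ P v} =
      Nat.card {p : Projectivization F V // P p.rep} * (Fintype.card F - 1) := by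
  haveI : Finite (Projectivization F V) := Quotient.finite _
  have hfun : ∀ v : {v : V // v ≠ 0 ∧ P v}, P (Projectivization.mk F v.1 v.2.1).rep := by
    intro v
    obtain ⟨a, ha⟩ := exists_smul_eq_mk_rep F v.1 v.2.1
    rw [← ha, Units.smul_def]
    exact hP _ a.ne_zero _ v.2.2
  refine card_of_fibers (fun v => ⟨Projectivization.mk F v.1 v.2.1, hfun v⟩) _ ?_
  rintro ⟨p, hp⟩
  rw [← card_fiber_mk' p]
  refine Nat.card_congr ⟨fun a => ⟨⟨a.1.1, a.1.2.1⟩, ?_⟩, fun b => ⟨⟨b.1.1, b.1.2, ?_⟩, ?_⟩, ?_, ?_⟩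
  · rw [mk'_eq_mk]
    exact congrArg Subtype.val a.2
  · have hm : Projectivization.mk F b.1.1 b.1.2 = p := by rw [← mk'_eq_mk]; exact b.2
    obtain ⟨a, ha⟩ := (mk_eq_mk_iff F b.1.1 p.rep b.1.2 p.rep_nonzero).1 (hm.trans (mk_rep p).symm)
    rw [← ha, Units.smul_def]
    exact hP _ a.ne_zero _ hp
  · exact Subtype.ext ((mk'_eq_mk F b.1).symm.trans b.2)
  · intro a; exact Subtype.ext (Subtype.ext rfl)
  · intro b; exact Subtype.ext (Subtype.ext rfl)

lemma proj_count2 [Finite V] (P : V → V → Prop)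
    (hP : ∀ (c d : F), c ≠ 0 → d ≠ 0 → ∀ v w, P v w → P (c • v) (d • w)) :
    Nat.card {vw : V × V // vw.1 ≠ 0 ∧ vw.2 ≠ 0 ∧ P vw.1 vw.2} =
      Nat.card {pq : Projectivization F V × Projectivization F V // P pq.1.rep pq.2.rep} *
        ((Fintype.card F - 1) * (Fintype.card F - 1)) := by
  haveI : Finite (Projectivization F V) := Quotient.finite _
  have hfun : ∀ vw : {vw : V × V // vw.1 ≠ 0 ∧ vw.2 ≠ 0 ∧ P vw.1 vw.2},
      P (Projectivization.mk F vw.1.1 vw.2.1).rep (Projectivization.mk F vw.1.2 vw.2.2.1).rep := by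
    intro vw
    obtain ⟨a, ha⟩ := exists_smul_eq_mk_rep F vw.1.1 vw.2.1
    obtain ⟨b, hb⟩ := exists_smul_eq_mk_rep F vw.1.2 vw.2.2.1
    rw [← ha, ← hb, Units.smul_def, Units.smul_def]
    exact hP _ _ a.ne_zero b.ne_zero _ _ vw.2.2.2
  refine card_of_fibers (fun vw => ⟨(Projectivization.mk F vw.1.1 vw.2.1,
      Projectivization.mk F vw.1.2 vw.2.2.1), hfun vw⟩) _ ?_
  rintro ⟨⟨p, q⟩, hpq⟩
  rw [show (Fintype.card F - 1) * (Fintype.card F - 1) =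
      Nat.card ({v : {u : V // u ≠ 0} // mk' F v = p} × {v : {u : V // u ≠ 0} // mk' F v = q}) by
    rw [Nat.card_prod, card_fiber_mk', card_fiber_mk']]
  refine Nat.card_congr ⟨fun a => ⟨⟨⟨a.1.1.1, a.1.2.1⟩, ?_⟩, ⟨⟨a.1.1.2, a.1.2.2.1⟩, ?_⟩⟩,
    fun b => ⟨⟨(b.1.1.1, b.2.1.1), b.1.1.2, b.2.1.2, ?_⟩, ?_⟩,
    fun a => Subtype.ext rfl,
    fun b => Prod.ext (Subtype.ext (Subtype.ext rfl)) (Subtype.ext (Subtype.ext rfl))⟩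
  · exact (mk'_eq_mk F _).trans (congrArg (fun x => x.1.1) a.2)
  · exact (mk'_eq_mk F _).trans (congrArg (fun x => x.1.2) a.2)
  · have hm1 : Projectivization.mk F b.1.1.1 b.1.1.2 = p := (mk'_eq_mk F b.1.1).symm.trans b.1.2
    have hm2 : Projectivization.mk F b.2.1.1 b.2.1.2 = q := (mk'_eq_mk F b.2.1).symm.trans b.2.2
    obtain ⟨a, ha⟩ := (mk_eq_mk_iff F b.1.1.1 p.rep b.1.1.2 p.rep_nonzero).1
      (hm1.trans (mk_rep p).symm)
    obtain ⟨c, hc⟩ := (mk_eq_mk_iff F b.2.1.1 q.rep b.2.1.2 q.rep_nonzero).1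
      (hm2.trans (mk_rep q).symm)
    rw [← ha, ← hc, Units.smul_def, Units.smul_def]
    exact hP _ _ a.ne_zero c.ne_zero _ _ hpq
  · exact Subtype.ext (Prod.ext ((mk'_eq_mk F b.1.1).symm.trans b.1.2)
      ((mk'_eq_mk F b.2.1).symm.trans b.2.2))

end counting

section main

variable {F : Type} [Field F] [Fintype F] {n : ℕ}

/-- The linear functional `x ↦ v ⬝ᵥ x`. -/
noncomputable def dotL (v : Fin (n + 1) → F) : (Fin (n + 1) → F) →ₗ[F] F where
  toFun x := v ⬝ᵥ x
  map_add' x y := dotProduct_add v x y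
  map_smul' c x := by simp [dotProduct_smul, smul_eq_mul]

lemma ker_dotL_finrank (v : Fin (n + 1) → F) (hv : v ≠ 0) :
    finrank F (LinearMap.ker (dotL v)) = n := by
  obtain ⟨i, hi⟩ := Function.ne_iff.1 hv
  rw [Pi.zero_apply] at hi
  have hsurj : Function.Surjective (dotL v) := by
    intro c
    refine ⟨(c * (v i)⁻¹) • (Pi.single i 1 : Fin (n + 1) → F), ?_⟩
    show v ⬝ᵥ ((c * (v i)⁻¹) • (Pi.single i 1 : Fin (n + 1) → F)) = c
    rw [dotProduct_smul, dotProduct_single, smul_eq_mul, mul_one]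
    field_simp
  have h := LinearMap.finrank_range_add_finrank_ker (dotL v)
  rw [LinearMap.range_eq_top.2 hsurj, finrank_top, Module.finrank_self,
    Module.finrank_fin_fun] at h
  omega

open Classical in
lemma count_x (σ : F ≃+* F) (M : Matrix (Fin (n + 1)) (Fin (n + 1)) F)
    (ξ : Fin (n + 1) → F) (hξ : ξ ≠ 0) :
    Nat.card {x : Fin (n + 1) → F //
        x ≠ 0 ∧ ξ ⬝ᵥ x = 0 ∧ (ξ ᵥ* M) ⬝ᵥ (fun i => σ (x i)) = 0} =
      if ∃ l : F, ξ ᵥ* M = l • (fun i => σ (ξ i)) then Fintype.card F ^ n - 1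
      else Fintype.card F ^ (n - 1) - 1 := by
  classical
  set η : Fin (n + 1) → F := fun i => σ.symm ((ξ ᵥ* M) i) with hη
  have hsig : ∀ x : Fin (n + 1) → F, (ξ ᵥ* M) ⬝ᵥ (fun i => σ (x i)) = σ (η ⬝ᵥ x) := by
    intro x
    rw [dotProduct, dotProduct, map_sum]
    refine Finset.sum_congr rfl fun i _ => ?_
    rw [_root_.map_mul, RingEquiv.apply_symm_apply]
  have hcond2 : ∀ x, ((ξ ᵥ* M) ⬝ᵥ (fun i => σ (x i)) = 0 ↔ η ⬝ᵥ x = 0) := by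
    intro x
    rw [hsig]
    exact ⟨fun h => σ.injective (by rw [h, map_zero]), fun h => by rw [h, map_zero]⟩
  have hiff : (∃ l : F, ξ ᵥ* M = l • (fun i => σ (ξ i))) ↔ ∃ l : F, η = l • ξ := by
    constructor
    · rintro ⟨l, hl⟩
      refine ⟨σ.symm l, funext fun i => ?_⟩
      simp [hη, hl, Pi.smul_apply, smul_eq_mul, _root_.map_mul, RingEquiv.symm_apply_apply]
    · rintro ⟨l, hl⟩
      refine ⟨σ l, funext fun i => ?_⟩
      have := congrFun hl i
      simp only [hη, Pi.smul_apply, smul_eq_mul] at this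
      have h2 := congrArg σ this
      rw [RingEquiv.apply_symm_apply, _root_.map_mul] at h2
      simpa [Pi.smul_apply, smul_eq_mul] using h2
  set W := LinearMap.ker (dotL ξ) ⊓ LinearMap.ker (dotL η) with hW
  have hmem : ∀ x, x ∈ W ↔ ξ ⬝ᵥ x = 0 ∧ η ⬝ᵥ x = 0 := by
    intro x
    rw [hW, Submodule.mem_inf, LinearMap.mem_ker, LinearMap.mem_ker]
    rfl
  have hcard : Nat.card {x : Fin (n + 1) → F //
      x ≠ 0 ∧ ξ ⬝ᵥ x = 0 ∧ (ξ ᵥ* M) ⬝ᵥ (fun i => σ (x i)) = 0} =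
      Fintype.card F ^ (finrank F W) - 1 := by
    have e : {x : Fin (n + 1) → F //
        x ≠ 0 ∧ ξ ⬝ᵥ x = 0 ∧ (ξ ᵥ* M) ⬝ᵥ (fun i => σ (x i)) = 0} ≃ {y : W // y ≠ 0} :=
      { toFun := fun x => ⟨⟨x.1, (hmem x.1).2 ⟨x.2.2.1, (hcond2 x.1).1 x.2.2.2⟩⟩,
          fun h => x.2.1 (by simpa using congrArg Subtype.val h)⟩
        invFun := fun y => ⟨y.1.1, fun h => y.2 (Subtype.ext h),
          ((hmem _).1 y.1.2).1, (hcond2 _).2 ((hmem _).1 y.1.2).2⟩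
        left_inv := fun x => Subtype.ext rfl
        right_inv := fun y => Subtype.ext (Subtype.ext rfl) }
    rw [Nat.card_congr e]
    haveI : Fintype W := Fintype.ofFinite W
    rw [Nat.card_eq_fintype_card]
    have : Fintype.card {y : W // ¬ y = 0} = Fintype.card W - Fintype.card {y : W // y = 0} :=
      Fintype.card_subtype_compl _
    rw [this, Fintype.card_subtype_eq (0 : W), card_eq_pow_finrank (K := F) (V := W)]
  rw [hcard]
  by_cases hc : ∃ l : F, η = l • ξ
  · rw [if_pos (hiff.2 hc)]
    obtain ⟨l, hl⟩ := hc
    have hle : LinearMap.ker (dotL ξ) ≤ LinearMap.ker (dotL η) := by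
      intro x hx
      have hx0 : ξ ⬝ᵥ x = 0 := hx
      show η ⬝ᵥ x = 0
      rw [hl, smul_dotProduct, hx0, smul_eq_mul, mul_zero]
    have : W = LinearMap.ker (dotL ξ) := by rw [hW, inf_eq_left.2 hle]
    rw [this, ker_dotL_finrank ξ hξ]
  · rw [if_neg (fun h => hc (hiff.1 h))]
    have hηne : η ≠ 0 := fun h0 => hc ⟨0, by rw [h0, zero_smul]⟩
    have hne : LinearMap.ker (dotL ξ) ≠ LinearMap.ker (dotL η) := by
      intro heq
      apply hc
      obtain ⟨i, hi⟩ := Function.ne_iff.1 hξ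
      rw [Pi.zero_apply] at hi
      set e : Fin (n + 1) → F := (ξ i)⁻¹ • (Pi.single i 1 : Fin (n + 1) → F) with he
      have hξe : ξ ⬝ᵥ e = 1 := by
        rw [he, dotProduct_smul, dotProduct_single, mul_one, smul_eq_mul,
          inv_mul_cancel₀ hi]
      refine ⟨η ⬝ᵥ e, funext fun j => ?_⟩
      have hx : ∀ x, ξ ⬝ᵥ x = 0 → η ⬝ᵥ x = 0 := by
        intro x hx0
        have : x ∈ LinearMap.ker (dotL ξ) := hx0
        rw [heq] at this
        exact this
      have key : ξ ⬝ᵥ (Pi.single j 1 - (ξ j) • e) = 0 := by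
        rw [dotProduct_sub, dotProduct_smul, hξe, dotProduct_single, smul_eq_mul]
        ring
      have h2 := hx _ key
      rw [dotProduct_sub, dotProduct_smul, sub_eq_zero, dotProduct_single, mul_one,
        smul_eq_mul] at h2
      rw [Pi.smul_apply, smul_eq_mul, h2]
      ring
    have h1 : ¬ (LinearMap.ker (dotL ξ) ≤ LinearMap.ker (dotL η)) := fun hle =>
      hne (Submodule.eq_of_le_of_finrank_le hle
        (by rw [ker_dotL_finrank ξ hξ, ker_dotL_finrank η hηne]))
    obtain ⟨x, hx1, hx2⟩ := SetLike.not_le_iff_exists.1 h1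
    have hlt : LinearMap.ker (dotL η) <
        LinearMap.ker (dotL η) ⊔ Submodule.span F {x} :=
      SetLike.lt_iff_le_and_exists.2 ⟨le_sup_left,
        x, Submodule.mem_sup_right (Submodule.mem_span_singleton_self x), hx2⟩
    have h2 := Submodule.finrank_lt_finrank_of_lt hlt
    have h3 : (LinearMap.ker (dotL η) ⊔ Submodule.span F {x}) ≤
        (LinearMap.ker (dotL ξ) ⊔ LinearMap.ker (dotL η)) :=
      sup_le le_sup_right
        ((Submodule.span_le.2 (Set.singleton_subset_iff.2 hx1)).trans le_sup_left)
    have h4 := Submodule.finrank_mono h3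
    have h5 : finrank F ↥(LinearMap.ker (dotL ξ) ⊔ LinearMap.ker (dotL η)) ≤ n + 1 := by
      have := Submodule.finrank_le (LinearMap.ker (dotL ξ) ⊔ LinearMap.ker (dotL η))
      rwa [Module.finrank_fin_fun] at this
    have h6 := Submodule.finrank_sup_add_finrank_inf_eq
      (LinearMap.ker (dotL ξ)) (LinearMap.ker (dotL η))
    rw [ker_dotL_finrank ξ hξ, ker_dotL_finrank η hηne] at h6
    rw [ker_dotL_finrank η hηne] at h2
    have h7 : Module.finrank F ↥(LinearMap.ker (dotL ξ) ⊓ LinearMap.ker (dotL η)) = n - 1 := by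
      clear * - h2 h4 h5 h6
      omega
    clear_value W
    subst hW
    rw [h7]

end main

noncomputable def theta {F : Type} [Field F] [Fintype F] {n : ℕ}
    (σ : F ≃+* F) (M : Matrix (Fin (n + 1)) (Fin (n + 1)) F) : ℕ :=
  Nat.card {ξ : Projectivization F (Fin (n + 1) → F) //
    ∃ l : F, ξ.rep ᵥ* M = l • (fun i => σ (ξ.rep i))}

theorem stmt_2 (F : Type) [Field F] [Fintype F] (n : ℕ) (hn : 2 ≤ n)
    (σ : F ≃+* F) (M : Matrix (Fin (n + 1)) (Fin (n + 1)) F) :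
    Nat.card {pq : Projectivization F (Fin (n + 1) → F) × Projectivization F (Fin (n + 1) → F) //
        pq.2.rep ⬝ᵥ pq.1.rep = 0 ∧ (pq.2.rep ᵥ* M) ⬝ᵥ (fun i => σ (pq.1.rep i)) = 0} =
      ((Fintype.card F) ^ (n + 1) - 1) * ((Fintype.card F) ^ (n - 1) - 1)
          / ((Fintype.card F) - 1) ^ 2
        + theta σ M * (Fintype.card F) ^ (n - 1) := by
  classical
  have hq2 : 2 ≤ Fintype.card F := Fintype.one_lt_card
  -- pair invariance
  have hinv : ∀ (c d : F), c ≠ 0 → d ≠ 0 → ∀ v w : Fin (n + 1) → F,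
      (fun v w : Fin (n + 1) → F => w ⬝ᵥ v = 0 ∧ (w ᵥ* M) ⬝ᵥ (fun i => σ (v i)) = 0) v w →
      (fun v w : Fin (n + 1) → F => w ⬝ᵥ v = 0 ∧ (w ᵥ* M) ⬝ᵥ (fun i => σ (v i)) = 0)
        (c • v) (d • w) := by
    intro c d hc hd v w hvw
    refine ⟨?_, ?_⟩
    · show (d • w) ⬝ᵥ (c • v) = 0
      rw [smul_dotProduct, dotProduct_smul, hvw.1]
      simp
    · show ((d • w) ᵥ* M) ⬝ᵥ (fun i => σ ((c • v) i)) = 0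
      have hfn : (fun i => σ ((c • v) i)) = σ c • (fun i => σ (v i)) := by
        funext i
        simp [Pi.smul_apply, smul_eq_mul, _root_.map_mul]
      rw [hfn, smul_vecMul, smul_dotProduct, dotProduct_smul, hvw.2]
      simp
  have h1 := proj_count2 (F := F) (V := Fin (n + 1) → F)
    (fun v w => w ⬝ᵥ v = 0 ∧ (w ᵥ* M) ⬝ᵥ (fun i => σ (v i)) = 0) hinv
  have hLHS : Nat.card {pq : Projectivization F (Fin (n + 1) → F) ×
        Projectivization F (Fin (n + 1) → F) //
      (fun v w : Fin (n + 1) → F =>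
        w ⬝ᵥ v = 0 ∧ (w ᵥ* M) ⬝ᵥ (fun i => σ (v i)) = 0) pq.1.rep pq.2.rep} =
      Nat.card {pq : Projectivization F (Fin (n + 1) → F) ×
        Projectivization F (Fin (n + 1) → F) //
      pq.2.rep ⬝ᵥ pq.1.rep = 0 ∧ (pq.2.rep ᵥ* M) ⬝ᵥ (fun i => σ (pq.1.rep i)) = 0} :=
    Nat.card_congr (Equiv.subtypeEquivRight fun _ => Iff.rfl)
  rw [hLHS] at h1
  -- sigma decomposition
  have h2 : Nat.card {vw : (Fin (n + 1) → F) × (Fin (n + 1) → F) // vw.1 ≠ 0 ∧ vw.2 ≠ 0 ∧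
      (fun v w : Fin (n + 1) → F =>
        w ⬝ᵥ v = 0 ∧ (w ᵥ* M) ⬝ᵥ (fun i => σ (v i)) = 0) vw.1 vw.2} =
      Nat.card (Σ ξ : {u : Fin (n + 1) → F // u ≠ 0}, {x : Fin (n + 1) → F //
        x ≠ 0 ∧ ξ.1 ⬝ᵥ x = 0 ∧ (ξ.1 ᵥ* M) ⬝ᵥ (fun i => σ (x i)) = 0}) :=
    Nat.card_congr ⟨fun vw => ⟨⟨vw.1.2, vw.2.2.1⟩, ⟨vw.1.1, vw.2.1, vw.2.2.2.1, vw.2.2.2.2⟩⟩,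
      fun s => ⟨(s.2.1, s.1.1), s.2.2.1, s.1.2, s.2.2.2.1, s.2.2.2.2⟩,
      fun _ => rfl, fun _ => rfl⟩
  -- evaluate the sigma cardinality as a sum
  have h3 : Nat.card (Σ ξ : {u : Fin (n + 1) → F // u ≠ 0}, {x : Fin (n + 1) → F //
        x ≠ 0 ∧ ξ.1 ⬝ᵥ x = 0 ∧ (ξ.1 ᵥ* M) ⬝ᵥ (fun i => σ (x i)) = 0}) =
      ∑ ξ : {u : Fin (n + 1) → F // u ≠ 0},
        if ∃ l : F, ξ.1 ᵥ* M = l • (fun i => σ (ξ.1 i))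
        then Fintype.card F ^ n - 1 else Fintype.card F ^ (n - 1) - 1 := by
    rw [Nat.card_eq_fintype_card, Fintype.card_sigma]
    refine Finset.sum_congr rfl fun ξ _ => ?_
    rw [← Nat.card_eq_fintype_card]
    exact count_x σ M ξ.1 ξ.2
  -- split the sum
  have h4 : (∑ ξ : {u : Fin (n + 1) → F // u ≠ 0},
        if ∃ l : F, ξ.1 ᵥ* M = l • (fun i => σ (ξ.1 i))
        then Fintype.card F ^ n - 1 else Fintype.card F ^ (n - 1) - 1) =
      (Finset.univ.filter (fun ξ : {u : Fin (n + 1) → F // u ≠ 0} =>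
          ∃ l : F, ξ.1 ᵥ* M = l • (fun i => σ (ξ.1 i)))).card * (Fintype.card F ^ n - 1) +
      (Finset.univ.filter (fun ξ : {u : Fin (n + 1) → F // u ≠ 0} =>
          ¬ ∃ l : F, ξ.1 ᵥ* M = l • (fun i => σ (ξ.1 i)))).card *
        (Fintype.card F ^ (n - 1) - 1) := by
    rw [Finset.sum_ite, Finset.sum_const, Finset.sum_const, smul_eq_mul, smul_eq_mul]
  set c1 := (Finset.univ.filter (fun ξ : {u : Fin (n + 1) → F // u ≠ 0} =>
      ∃ l : F, ξ.1 ᵥ* M = l • (fun i => σ (ξ.1 i)))).card with hc1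
  set c2 := (Finset.univ.filter (fun ξ : {u : Fin (n + 1) → F // u ≠ 0} =>
      ¬ ∃ l : F, ξ.1 ᵥ* M = l • (fun i => σ (ξ.1 i)))).card with hc2
  -- total count of nonzero vectors
  have hcV : Fintype.card (Fin (n + 1) → F) = Fintype.card F ^ (n + 1) := by
    rw [Fintype.card_fun, Fintype.card_fin]
  have hN : Fintype.card {u : Fin (n + 1) → F // u ≠ 0} = Fintype.card F ^ (n + 1) - 1 := by
    have h := Fintype.card_subtype_compl (p := fun u : Fin (n + 1) → F => u = 0)
    rw [Fintype.card_subtype_eq (0 : Fin (n + 1) → F), hcV] at h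
    rw [← h]
  have hsum : c1 + c2 = Fintype.card F ^ (n + 1) - 1 := by
    rw [hc1, hc2, Finset.card_filter_add_card_filter_not, Finset.card_univ, hN]
  -- c1 equals theta * (q - 1)
  have hPθ : ∀ (c : F), c ≠ 0 → ∀ v : Fin (n + 1) → F,
      (fun u : Fin (n + 1) → F => ∃ l : F, u ᵥ* M = l • (fun i => σ (u i))) v →
      (fun u : Fin (n + 1) → F => ∃ l : F, u ᵥ* M = l • (fun i => σ (u i))) (c • v) := by
    intro c hc v hv
    obtain ⟨l, hl⟩ := hv
    have hsc : σ c ≠ 0 := fun h => hc (by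
      have := congrArg σ.symm h
      rwa [RingEquiv.symm_apply_apply, map_zero] at this)
    refine ⟨c * l * (σ c)⁻¹, ?_⟩
    show (c • v) ᵥ* M = _
    rw [smul_vecMul, hl]
    funext i
    simp only [Pi.smul_apply, smul_eq_mul, _root_.map_mul]
    field_simp
  have hθ : c1 = theta σ M * (Fintype.card F - 1) := by
    rw [hc1, ← Fintype.card_subtype, ← Nat.card_eq_fintype_card]
    rw [Nat.card_congr (Equiv.subtypeSubtypeEquivSubtypeInter
      (fun u : Fin (n + 1) → F => u ≠ 0)
      (fun u => ∃ l : F, u ᵥ* M = l • (fun i => σ (u i))))]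
    rw [proj_count (fun u : Fin (n + 1) → F =>
      ∃ l : F, u ᵥ* M = l • (fun i => σ (u i))) hPθ]
    congr 1
  -- put everything together
  rw [h2, h3, h4] at h1
  obtain ⟨m, rfl⟩ : ∃ m, n = m + 2 := ⟨n - 2, (Nat.sub_add_cancel hn).symm⟩
  have hmm : m + 2 - 1 = m + 1 := rfl
  rw [hmm] at h1 ⊢
  apply Nat.eq_of_mul_eq_mul_right
    (show 0 < (Fintype.card F - 1) * (Fintype.card F - 1) by
      have : 1 ≤ Fintype.card F - 1 := by clear * - hq2; omega
      exact Nat.mul_pos this this)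
  rw [← h1, add_mul]

  have hdvd : (Fintype.card F - 1) * (Fintype.card F - 1) ∣
      (Fintype.card F ^ (m + 2 + 1) - 1) * (Fintype.card F ^ (m + 1) - 1) :=
    mul_dvd_mul (by simpa using Nat.sub_dvd_pow_sub_pow (Fintype.card F) 1 (m + 2 + 1))
      (by simpa using Nat.sub_dvd_pow_sub_pow (Fintype.card F) 1 (m + 1))
  have hX : (Fintype.card F ^ (m + 2 + 1) - 1) * (Fintype.card F ^ (m + 1) - 1)
        / (Fintype.card F - 1) ^ 2 * ((Fintype.card F - 1) * (Fintype.card F - 1)) =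
      (Fintype.card F ^ (m + 2 + 1) - 1) * (Fintype.card F ^ (m + 1) - 1) := by
    rw [sq]
    exact Nat.div_mul_cancel hdvd
  rw [hX]
  -- pure arithmetic
  have e1 : 1 ≤ Fintype.card F ^ (m + 2 + 1) := Nat.one_le_pow _ _ (by clear * - hq2; omega)
  have e2 : 1 ≤ Fintype.card F ^ (m + 2) := Nat.one_le_pow _ _ (by clear * - hq2; omega)
  have e3 : 1 ≤ Fintype.card F ^ (m + 1) := Nat.one_le_pow _ _ (by clear * - hq2; omega)
  have e4 : 1 ≤ Fintype.card F := by clear * - hq2; omega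
  zify [e1, e2, e3, e4] at hsum hθ ⊢
  linear_combination ((Fintype.card F : ℤ) ^ (m + 1) - 1) * hsum +
    ((Fintype.card F : ℤ) ^ (m + 2) - (Fintype.card F : ℤ) ^ (m + 1)) * hθ
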